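/- Let G be a group and M a subgroup of G that is abelian and malnormal in G. Let C be a subgroup of M, and let v, w be elements of G such that v ∉ M or w ∉ M. Then there exists at most one pair of elements γ₁, γ₂ ∈ C such that w = γ₁ v γ₂; that is, if γ₁, γ₂, γ₃, γ₄ ∈ C satisfy γ₁ v γ₂ = w = γ₃ v γ₄, then γ₁ = γ₃ and γ₂ = γ₄. -/
import Mathlib


/-- Lemma 4 (uniqueness part): if `M` is an abelian malnormal subgroup of `G`,
`C ≤ M`, and `v ∉ M` or `w ∉ M`, then there is at most one pair `γ₁, γ₂ ∈ C`
with `w = γ₁ * v * γ₂`. -/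
theorem stmt_0 {G : Type*} [Group G] (M : Subgroup G)
    (habelian : ∀ x ∈ M, ∀ y ∈ M, x * y = y * x)
    (hmalnormal : ∀ g : G, g ∉ M → ∀ x ∈ M, g⁻¹ * x * g ∈ M → x = 1)
    (C : Subgroup G) (hCM : C ≤ M)
    (v w : G) (hvw : v ∉ M ∨ w ∉ M)
    (γ₁ γ₂ γ₃ γ₄ : G)
    (hγ₁ : γ₁ ∈ C) (hγ₂ : γ₂ ∈ C) (hγ₃ : γ₃ ∈ C) (hγ₄ : γ₄ ∈ C)
    (h₁ : γ₁ * v * γ₂ = w) (h₂ : γ₃ * v * γ₄ = w) :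
    γ₁ = γ₃ ∧ γ₂ = γ₄ := by
  -- First show v ∉ M: otherwise w = γ₁ * v * γ₂ ∈ M, contradicting both disjuncts.
  have hvnotM : v ∉ M := by
    intro hv
    have hw : w ∈ M := h₁ ▸ M.mul_mem (M.mul_mem (hCM hγ₁) hv) (hCM hγ₂)
    rcases hvw with h | h
    · exact h hv
    · exact h hw
  -- x := γ₃⁻¹ * γ₁ ∈ M, and v⁻¹ * x * v = γ₄ * γ₂⁻¹ ∈ M
  have hxM : γ₃⁻¹ * γ₁ ∈ M := M.mul_mem (M.inv_mem (hCM hγ₃)) (hCM hγ₁)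
  have heq : γ₁ * v * γ₂ = γ₃ * v * γ₄ := h₁.trans h₂.symm
  have hconj : v⁻¹ * (γ₃⁻¹ * γ₁) * v = γ₄ * γ₂⁻¹ := by
    calc v⁻¹ * (γ₃⁻¹ * γ₁) * v = v⁻¹ * (γ₃⁻¹ * (γ₁ * v * γ₂) * γ₂⁻¹) := by group
      _ = v⁻¹ * (γ₃⁻¹ * (γ₃ * v * γ₄) * γ₂⁻¹) := by rw [heq]
      _ = γ₄ * γ₂⁻¹ := by group
  have hconjM : v⁻¹ * (γ₃⁻¹ * γ₁) * v ∈ M := by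
    rw [hconj]
    exact M.mul_mem (hCM hγ₄) (M.inv_mem (hCM hγ₂))
  have h1 : γ₃⁻¹ * γ₁ = 1 := hmalnormal v hvnotM _ hxM hconjM
  have hg13 : γ₁ = γ₃ := by
    have := mul_eq_one_iff_inv_eq.mp h1
    simpa using this.symm
  refine ⟨hg13, ?_⟩
  subst hg13
  have : γ₁ * v * γ₂ = γ₁ * v * γ₄ := h₁.trans h₂.symm
  exact mul_left_cancel this
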